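/- Let V be a braided monoidal category and let (A, μ, η, δ, ε) be a bimonoid in V with respect to the inverse braiding, with corresponding lax tricocycloid operator v = c_{A,A}∘(1_A⊗μ)∘(δ⊗1_A). Then the bimonoid is a Hopf monoid (i.e. admits an antipode s : A → A with μ∘(s⊗1_A)∘δ = η∘ε = μ∘(1_A⊗s)∘δ) if and only if v is invertible. -/

import Mathlib

open CategoryTheory MonoidalCategory

open CategoryTheory MonoidalCategory

variable {V : Type*} [Category V] [MonoidalCategory V] [BraidedCategory V]

section Aux

variable {A : V} (μ : A ⊗ A ⟶ A) (η : 𝟙_ V ⟶ A) (δ : A ⟶ A ⊗ A) (ε : A ⟶ 𝟙_ V)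

/-- Composition law for `G f := (δ ▷ A) ≫ α ≫ (A ◁ f)`. -/
theorem fusion_Gcomp (hco : δ ≫ (δ ▷ A) ≫ (α_ A A A).hom = δ ≫ (A ◁ δ))
    {X Y : V} (f : A ⊗ A ⟶ X) (g : A ⊗ X ⟶ Y) :
    (δ ▷ A) ≫ (α_ A A A).hom ≫ (A ◁ f) ≫ (δ ▷ X) ≫ (α_ A A X).hom ≫ (A ◁ g)
      = (δ ▷ A) ≫ (α_ A A A).hom ≫ (A ◁ ((δ ▷ A) ≫ (α_ A A A).hom ≫ (A ◁ f) ≫ g)) := by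
  have hco' : δ ≫ (δ ▷ A) = δ ≫ (A ◁ δ) ≫ (α_ A A A).inv := by
    rw [← cancel_mono (α_ A A A).hom]; simpa using hco
  have pent : (α_ A A A).inv ▷ A ≫ (α_ (A ⊗ A) A A).hom ≫ (α_ A A (A ⊗ A)).hom
      = (α_ A (A ⊗ A) A).hom ≫ A ◁ (α_ A A A).hom := by monoidal
  rw [whisker_exchange_assoc δ f]
  rw [← associator_naturality_left_assoc δ A A]
  slice_lhs 1 2 => rw [← comp_whiskerRight, hco']
  rw [comp_whiskerRight, comp_whiskerRight]
  slice_lhs 5 6 => rw [associator_naturality_right A A f]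
  slice_lhs 3 5 => rw [pent]
  slice_lhs 2 3 => rw [associator_naturality_middle A δ A]
  simp only [Category.assoc, MonoidalCategory.whiskerLeft_comp]

theorem fusion_Gcounit (hcu : δ ≫ (A ◁ ε) = (ρ_ A).inv) :
    (δ ▷ A) ≫ (α_ A A A).hom ≫ (A ◁ ((ε ▷ A) ≫ (λ_ A).hom)) = 𝟙 (A ⊗ A) := by
  rw [MonoidalCategory.whiskerLeft_comp, ← associator_naturality_middle_assoc A ε A,
    MonoidalCategory.triangle]
  slice_lhs 1 2 => rw [← comp_whiskerRight, hcu]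
  rw [← comp_whiskerRight]
  simp

/-- `δ = ρ⁻¹ ≫ (A ◁ η) ≫ H`. -/
theorem fusion_delta_eq (hη : (A ◁ η) ≫ μ = (ρ_ A).hom) :
    (ρ_ A).inv ≫ (A ◁ η) ≫ (δ ▷ A) ≫ (α_ A A A).hom ≫ (A ◁ μ) = δ := by
  rw [whisker_exchange_assoc δ η, associator_naturality_right_assoc A A η,
    ← MonoidalCategory.whiskerLeft_comp, hη, ← rightUnitor_inv_naturality_assoc δ]
  have : (ρ_ (A ⊗ A)).inv ≫ (α_ A A (𝟙_ V)).hom ≫ (A ◁ (ρ_ A).hom) = 𝟙 (A ⊗ A) := by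
    monoidal
  rw [this, Category.comp_id]

/-- `H ≫ E = μ` where `E = (ε ▷ A) ≫ λ`. -/
theorem fusion_HE (hεδ : δ ≫ (ε ▷ A) = (λ_ A).inv) :
    (δ ▷ A) ≫ (α_ A A A).hom ≫ (A ◁ μ) ≫ (ε ▷ A) ≫ (λ_ A).hom = μ := by
  rw [whisker_exchange_assoc ε μ, ← associator_naturality_left_assoc ε A A]
  slice_lhs 1 2 => rw [← comp_whiskerRight, hεδ]
  simp only [Category.assoc]
  rw [MonoidalCategory.leftUnitor_naturality]
  have : (λ_ A).inv ▷ A ≫ (α_ (𝟙_ V) A A).hom ≫ (λ_ (A ⊗ A)).hom = 𝟙 (A ⊗ A) := by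
    monoidal
  slice_lhs 1 3 => rw [this]
  rw [Category.id_comp]

/-- `H` is a right module map: `(H ▷ A) ≫ R = R ≫ H`. -/
theorem fusion_module (hassoc : (μ ▷ A) ≫ μ = (α_ A A A).hom ≫ (A ◁ μ) ≫ μ) :
    (((δ ▷ A) ≫ (α_ A A A).hom ≫ (A ◁ μ)) ▷ A) ≫ (α_ A A A).hom ≫ (A ◁ μ)
      = (α_ A A A).hom ≫ (A ◁ μ) ≫ (δ ▷ A) ≫ (α_ A A A).hom ≫ (A ◁ μ) := by
  conv_rhs => rw [whisker_exchange_assoc δ μ, ← associator_naturality_left_assoc δ A A,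
    associator_naturality_right_assoc A A μ]
  rw [comp_whiskerRight, comp_whiskerRight, Category.assoc, Category.assoc]
  rw [associator_naturality_middle_assoc A μ A]
  rw [← MonoidalCategory.whiskerLeft_comp, hassoc]
  rw [← pentagon_assoc]
  simp only [Category.assoc, MonoidalCategory.whiskerLeft_comp]

/-- `E` is a right module map: `(E ▷ A) ≫ μ = R ≫ E`. -/
theorem fusion_Emod :
    (((ε ▷ A) ≫ (λ_ A).hom) ▷ A) ≫ μ
      = (α_ A A A).hom ≫ (A ◁ μ) ≫ (ε ▷ A) ≫ (λ_ A).hom := by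
  rw [whisker_exchange_assoc ε μ, ← associator_naturality_left_assoc ε A A,
    MonoidalCategory.leftUnitor_naturality]
  rw [comp_whiskerRight, Category.assoc]
  congr 1
  have hstr : (λ_ A).hom ▷ A = (α_ (𝟙_ V) A A).hom ≫ (λ_ (A ⊗ A)).hom := by monoidal
  rw [hstr, Category.assoc]

theorem fusion_unitR (hη : (η ▷ A) ≫ μ = (λ_ A).hom) :
    (((ρ_ A).inv ≫ (A ◁ η)) ▷ A) ≫ (α_ A A A).hom ≫ (A ◁ μ) = 𝟙 (A ⊗ A) := by
  rw [comp_whiskerRight, Category.assoc, associator_naturality_middle_assoc A η A,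
    ← MonoidalCategory.whiskerLeft_comp, hη]
  monoidal

theorem fusion_etaE : (ρ_ A).inv ≫ (A ◁ η) ≫ (ε ▷ A) ≫ (λ_ A).hom = ε ≫ η := by
  rw [whisker_exchange_assoc ε η, ← rightUnitor_inv_naturality_assoc ε,
    MonoidalCategory.leftUnitor_naturality η, ← unitors_inv_equal]
  simp

/-- `ρ⁻¹ ≫ (A ◁ η) ≫ (δ ▷ A) ≫ α = δ ≫ (A ◁ (ρ⁻¹ ≫ (A ◁ η)))`. -/
theorem fusion_coactUnit :
    (ρ_ A).inv ≫ (A ◁ η) ≫ (δ ▷ A) ≫ (α_ A A A).hom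
      = δ ≫ (A ◁ ((ρ_ A).inv ≫ (A ◁ η))) := by
  rw [whisker_exchange_assoc δ η, ← rightUnitor_inv_naturality_assoc δ,
    associator_naturality_right A A η, rightUnitor_tensor_inv_assoc]
  simp [MonoidalCategory.whiskerLeft_comp]

end Aux

/-- A bimonoid in `V` with respect to the inverse braiding: a monoid structure `(μ, η)`
and a comonoid structure `(δ, ε)` satisfying the four bimonoid compatibility axioms, the
middle interchange using the inverse braiding `c⁻¹`. -/
def IsBimonoidInv (A : V) (μ : A ⊗ A ⟶ A) (η : 𝟙_ V ⟶ A) (δ : A ⟶ A ⊗ A)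
    (ε : A ⟶ 𝟙_ V) : Prop :=
  ((μ ▷ A) ≫ μ = (α_ A A A).hom ≫ (A ◁ μ) ≫ μ) ∧
  ((η ▷ A) ≫ μ = (λ_ A).hom) ∧
  ((A ◁ η) ≫ μ = (ρ_ A).hom) ∧
  (δ ≫ (δ ▷ A) ≫ (α_ A A A).hom = δ ≫ (A ◁ δ)) ∧
  (δ ≫ (ε ▷ A) = (λ_ A).inv) ∧
  (δ ≫ (A ◁ ε) = (ρ_ A).inv) ∧
  (η ≫ ε = 𝟙 (𝟙_ V)) ∧
  (μ ≫ ε = (ε ⊗ₘ ε) ≫ (λ_ (𝟙_ V)).hom) ∧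
  (η ≫ δ = (λ_ (𝟙_ V)).inv ≫ (η ⊗ₘ η)) ∧
  (μ ≫ δ = (δ ⊗ₘ δ) ≫ (α_ A A (A ⊗ A)).hom ≫
     (A ◁ ((α_ A A A).inv ≫ ((β_ A A).inv ▷ A) ≫ (α_ A A A).hom)) ≫
     (α_ A A (A ⊗ A)).inv ≫ (μ ⊗ₘ μ))

/-- An augmented lax tricocycloid: `v` satisfies the 3-cocycle condition and `(η, ε)` is
an augmentation for `(A, v)`. -/
def IsAugTricocycloid (A : V) (v : A ⊗ A ⟶ A ⊗ A) (η : 𝟙_ V ⟶ A)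
    (ε : A ⟶ 𝟙_ V) : Prop :=
  ((v ▷ A) ≫ (α_ A A A).hom ≫ (A ◁ (β_ A A).hom) ≫ (α_ A A A).inv ≫ (v ▷ A) =
    (α_ A A A).hom ≫ (A ◁ v) ≫ (α_ A A A).inv ≫ (v ▷ A) ≫
      (α_ A A A).hom ≫ (A ◁ v) ≫ (α_ A A A).inv) ∧
  ((ρ_ A).inv ≫ (A ◁ η) ≫ v ≫ (A ◁ ε) ≫ (ρ_ A).hom = 𝟙 A) ∧
  (v ≫ (ε ▷ A) ≫ (λ_ A).hom = (A ◁ ε) ≫ (ρ_ A).hom) ∧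
  ((λ_ A).inv ≫ (η ▷ A) ≫ v = (ρ_ A).inv ≫ (A ◁ η)) ∧
  (η ≫ ε = 𝟙 (𝟙_ V))


/-- A bimonoid `(A, μ, η, δ, ε)` in `V` with respect to the inverse
braiding is Hopf (i.e. admits an antipode `s` with `μ∘(s⊗1)∘δ = η∘ε = μ∘(1⊗s)∘δ`) if and
only if the corresponding lax tricocycloid operator `v = c_{A,A}∘(1_A⊗μ)∘(δ⊗1_A)` is
invertible. -/
theorem hopf_iff_fusion_invertible (A : V) (μ : A ⊗ A ⟶ A) (η : 𝟙_ V ⟶ A)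
    (δ : A ⟶ A ⊗ A) (ε : A ⟶ 𝟙_ V) (h : IsBimonoidInv A μ η δ ε) :
    (∃ s : A ⟶ A, δ ≫ (s ▷ A) ≫ μ = ε ≫ η ∧ δ ≫ (A ◁ s) ≫ μ = ε ≫ η) ↔
      IsIso ((δ ▷ A) ≫ (α_ A A A).hom ≫ (A ◁ μ) ≫ (β_ A A).hom) := by
  obtain ⟨h₁, h₂, h₃, h₄, h₅, h₆, h₇, h₈, h₉, h₁₀⟩ := h
  set H : A ⊗ A ⟶ A ⊗ A := (δ ▷ A) ≫ (α_ A A A).hom ≫ (A ◁ μ) with hH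
  have hv : (δ ▷ A) ≫ (α_ A A A).hom ≫ (A ◁ μ) ≫ (β_ A A).hom = H ≫ (β_ A A).hom := by
    rw [hH]; simp [Category.assoc]
  -- (A ◁ μ) ≫ μ = α⁻¹ ≫ (μ ▷ A) ≫ μ
  have hassoc' : (A ◁ μ) ≫ μ = (α_ A A A).inv ≫ (μ ▷ A) ≫ μ := by
    rw [h₁]; simp
  constructor
  · rintro ⟨s, hs₁, hs₂⟩
    -- w is the inverse of H
    set w : A ⊗ A ⟶ A ⊗ A := (δ ▷ A) ≫ (α_ A A A).hom ≫ (A ◁ ((s ▷ A) ≫ μ)) with hw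
    -- inner computation A : H ≫ (s ▷ A) ≫ μ = (ε ▷ A) ≫ λ
    have lemA : H ≫ (s ▷ A) ≫ μ = (ε ▷ A) ≫ (λ_ A).hom := by
      rw [hH]
      simp only [Category.assoc]
      rw [whisker_exchange_assoc s μ, ← associator_naturality_left_assoc s A A, hassoc']
      slice_lhs 3 4 => rw [Iso.hom_inv_id]
      rw [Category.id_comp]
      slice_lhs 1 3 => rw [← Category.assoc, ← comp_whiskerRight, ← comp_whiskerRight,
        Category.assoc, hs₁]
      rw [comp_whiskerRight]
      simp only [Category.assoc]
      rw [h₂]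
    -- inner computation B : w ≫ μ = (ε ▷ A) ≫ λ
    have lemB : w ≫ μ = (ε ▷ A) ≫ (λ_ A).hom := by
      rw [hw]
      simp only [MonoidalCategory.whiskerLeft_comp, Category.assoc]
      rw [← associator_naturality_middle_assoc A s A, hassoc']
      slice_lhs 3 4 => rw [Iso.hom_inv_id]
      rw [Category.id_comp]
      slice_lhs 1 3 => rw [← Category.assoc, ← comp_whiskerRight, ← comp_whiskerRight,
        Category.assoc, hs₂]
      rw [comp_whiskerRight]
      simp only [Category.assoc]
      rw [h₂]
    have lemA' : δ ▷ A ≫ (α_ A A A).hom ≫ A ◁ μ ≫ s ▷ A ≫ μ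
        = ε ▷ A ≫ (λ_ A).hom := by
      simpa only [hH, Category.assoc] using lemA
    have lemB' : δ ▷ A ≫ (α_ A A A).hom ≫ A ◁ (s ▷ A ≫ μ) ≫ μ
        = ε ▷ A ≫ (λ_ A).hom := by
      simpa only [hw, Category.assoc] using lemB
    have hHw : H ≫ w = 𝟙 (A ⊗ A) := by
      rw [hH, hw]
      simp only [Category.assoc]
      rw [fusion_Gcomp δ h₄ μ ((s ▷ A) ≫ μ)]
      rw [show (δ ▷ A) ≫ (α_ A A A).hom ≫ A ◁ μ ≫ (s ▷ A ≫ μ)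
          = δ ▷ A ≫ (α_ A A A).hom ≫ A ◁ μ ≫ s ▷ A ≫ μ by
        simp only [Category.assoc]]
      rw [lemA']
      exact fusion_Gcounit δ ε h₆
    have hwH : w ≫ H = 𝟙 (A ⊗ A) := by
      rw [hH, hw]
      simp only [Category.assoc]
      rw [fusion_Gcomp δ h₄ ((s ▷ A) ≫ μ) μ]
      rw [show (δ ▷ A) ≫ (α_ A A A).hom ≫ A ◁ (s ▷ A ≫ μ) ≫ μ
          = δ ▷ A ≫ (α_ A A A).hom ≫ A ◁ (s ▷ A ≫ μ) ≫ μ by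
        simp only [Category.assoc]]
      rw [lemB']
      exact fusion_Gcounit δ ε h₆
    rw [hv]
    exact ⟨⟨(β_ A A).inv ≫ w, by
      rw [Category.assoc, ← Category.assoc (β_ A A).hom, Iso.hom_inv_id,
        Category.id_comp, hHw], by
      rw [Category.assoc, ← Category.assoc w, hwH, Category.id_comp, Iso.inv_hom_id]⟩⟩
  · intro hIso
    rw [hv] at hIso
    have hHiso : IsIso H := by
      have : H = (H ≫ (β_ A A).hom) ≫ (β_ A A).inv := by simp
      rw [this]; infer_instance
    set k : A ⊗ A ⟶ A ⊗ A := inv H with hk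
    have hHk : H ≫ k = 𝟙 (A ⊗ A) := IsIso.hom_inv_id H
    have hkH : k ≫ H = 𝟙 (A ⊗ A) := IsIso.inv_hom_id H
    -- comodule property of H and k
    have hcomodH : H ≫ (δ ▷ A) ≫ (α_ A A A).hom
        = (δ ▷ A) ≫ (α_ A A A).hom ≫ (A ◁ H) := by
      have := fusion_Gcomp δ h₄ μ (𝟙 (A ⊗ A))
      simpa [hH, Category.assoc] using this
    have hcomodk : (δ ▷ A) ≫ (α_ A A A).hom ≫ (A ◁ k)
        = k ≫ (δ ▷ A) ≫ (α_ A A A).hom := by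
      have e : k ≫ (H ≫ (δ ▷ A) ≫ (α_ A A A).hom) ≫ (A ◁ k)
          = k ≫ ((δ ▷ A) ≫ (α_ A A A).hom ≫ (A ◁ H)) ≫ (A ◁ k) := by rw [hcomodH]
      simp only [Category.assoc] at e
      rw [← Category.assoc k H, hkH, Category.id_comp,
        ← MonoidalCategory.whiskerLeft_comp, hHk, MonoidalCategory.whiskerLeft_id,
        Category.comp_id] at e
      exact e
    -- module property of H and k
    have hmodH := fusion_module μ δ h₁
    rw [← hH] at hmodH
    have hmodk : (k ▷ A) ≫ (α_ A A A).hom ≫ (A ◁ μ)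
        = (α_ A A A).hom ≫ (A ◁ μ) ≫ k := by
      have e : (k ▷ A) ≫ ((H ▷ A) ≫ (α_ A A A).hom ≫ (A ◁ μ)) ≫ k
          = (k ▷ A) ≫ ((α_ A A A).hom ≫ (A ◁ μ) ≫ (δ ▷ A) ≫ (α_ A A A).hom ≫ (A ◁ μ)) ≫ k := by
        rw [hmodH]
      simp only [Category.assoc] at e
      rw [← comp_whiskerRight_assoc, hkH, id_whiskerRight, Category.id_comp] at e
      rw [show A ◁ μ ≫ δ ▷ A ≫ (α_ A A A).hom ≫ A ◁ μ ≫ k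
          = A ◁ μ ≫ (δ ▷ A ≫ (α_ A A A).hom ≫ A ◁ μ) ≫ k from by
        simp only [Category.assoc], ← hH, hHk, Category.comp_id] at e
      exact e.symm
    -- δ ≫ k = ρ⁻¹ ≫ (A ◁ η)
    have hdel := fusion_delta_eq μ η δ h₃
    rw [← hH] at hdel
    have hδk : δ ≫ k = (ρ_ A).inv ≫ (A ◁ η) := by
      rw [← hdel]
      simp only [Category.assoc, hHk, Category.comp_id]
    -- k ≫ μ = E
    have hHE := fusion_HE μ δ ε h₅
    rw [show δ ▷ A ≫ (α_ A A A).hom ≫ A ◁ μ ≫ ε ▷ A ≫ (λ_ A).hom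
        = H ≫ ((ε ▷ A) ≫ (λ_ A).hom) from by rw [hH]; simp only [Category.assoc]] at hHE
    have hkμ : k ≫ μ = (ε ▷ A) ≫ (λ_ A).hom := by
      rw [← hHE, ← Category.assoc, hkH, Category.id_comp]
    set s : A ⟶ A := (ρ_ A).inv ≫ (A ◁ η) ≫ k ≫ (ε ▷ A) ≫ (λ_ A).hom with hs
    have e1 : ((ε ▷ A) ▷ A) ≫ ((λ_ A).hom ▷ A) ≫ μ
        = (α_ A A A).hom ≫ (A ◁ μ) ≫ (ε ▷ A) ≫ (λ_ A).hom := by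
      have := fusion_Emod μ ε
      rwa [comp_whiskerRight, Category.assoc] at this
    have e2 : ((ρ_ A).inv ▷ A) ≫ ((A ◁ η) ▷ A) ≫ (α_ A A A).hom ≫ (A ◁ μ)
        = 𝟙 (A ⊗ A) := by
      have := fusion_unitR μ η h₂
      rwa [comp_whiskerRight, Category.assoc] at this
    refine ⟨s, ?_, ?_⟩
    · -- left antipode axiom
      rw [hs]
      simp only [comp_whiskerRight, Category.assoc]
      calc δ ≫ (ρ_ A).inv ▷ A ≫ (A ◁ η) ▷ A ≫ k ▷ A ≫ (ε ▷ A) ▷ A ≫ (λ_ A).hom ▷ A ≫ μ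
          = δ ≫ (ρ_ A).inv ▷ A ≫ (A ◁ η) ▷ A ≫
              ((k ▷ A) ≫ (α_ A A A).hom ≫ (A ◁ μ)) ≫ (ε ▷ A) ≫ (λ_ A).hom := by
            rw [e1]; simp only [Category.assoc]
        _ = δ ≫ ((ρ_ A).inv ▷ A ≫ (A ◁ η) ▷ A ≫ (α_ A A A).hom ≫ (A ◁ μ)) ≫
              k ≫ (ε ▷ A) ≫ (λ_ A).hom := by
            rw [hmodk]; simp only [Category.assoc]
        _ = δ ≫ k ≫ (ε ▷ A) ≫ (λ_ A).hom := by rw [e2, Category.id_comp]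
        _ = (ρ_ A).inv ≫ (A ◁ η) ≫ (ε ▷ A) ≫ (λ_ A).hom := by
            rw [← Category.assoc, hδk, Category.assoc]
        _ = ε ≫ η := fusion_etaE η ε
    · -- right antipode axiom
      rw [hs]
      simp only [MonoidalCategory.whiskerLeft_comp, Category.assoc]
      have c1 := fusion_coactUnit η δ
      have e3 : δ ≫ A ◁ (ρ_ A).inv ≫ A ◁ (A ◁ η) ≫ A ◁ k
          = (ρ_ A).inv ≫ A ◁ η ≫ k ≫ δ ▷ A ≫ (α_ A A A).hom := by
        calc δ ≫ A ◁ (ρ_ A).inv ≫ A ◁ (A ◁ η) ≫ A ◁ k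
            = (δ ≫ A ◁ ((ρ_ A).inv ≫ A ◁ η)) ≫ A ◁ k := by
              simp only [MonoidalCategory.whiskerLeft_comp, Category.assoc]
          _ = ((ρ_ A).inv ≫ A ◁ η ≫ δ ▷ A ≫ (α_ A A A).hom) ≫ A ◁ k := by
              rw [← c1]
          _ = (ρ_ A).inv ≫ A ◁ η ≫ (δ ▷ A ≫ (α_ A A A).hom ≫ A ◁ k) := by
              simp only [Category.assoc]
          _ = (ρ_ A).inv ≫ A ◁ η ≫ k ≫ δ ▷ A ≫ (α_ A A A).hom := by
              rw [hcomodk]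
      calc δ ≫ A ◁ (ρ_ A).inv ≫ A ◁ (A ◁ η) ≫ A ◁ k ≫ A ◁ (ε ▷ A) ≫ A ◁ (λ_ A).hom ≫ μ
          = (δ ≫ A ◁ (ρ_ A).inv ≫ A ◁ (A ◁ η) ≫ A ◁ k) ≫
              (A ◁ (ε ▷ A) ≫ A ◁ (λ_ A).hom ≫ μ) := by
            simp only [Category.assoc]
        _ = ((ρ_ A).inv ≫ A ◁ η ≫ k ≫ δ ▷ A ≫ (α_ A A A).hom) ≫
              (A ◁ (ε ▷ A) ≫ A ◁ (λ_ A).hom ≫ μ) := by rw [e3]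
        _ = (ρ_ A).inv ≫ A ◁ η ≫ k ≫
              ((δ ▷ A) ≫ (α_ A A A).hom ≫ A ◁ ((ε ▷ A) ≫ (λ_ A).hom)) ≫ μ := by
            simp only [Category.assoc, MonoidalCategory.whiskerLeft_comp]
        _ = (ρ_ A).inv ≫ A ◁ η ≫ k ≫ μ := by
            rw [fusion_Gcounit δ ε h₆, Category.id_comp]
        _ = (ρ_ A).inv ≫ A ◁ η ≫ (ε ▷ A) ≫ (λ_ A).hom := by rw [hkμ]
        _ = ε ≫ η := fusion_etaE η ε
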